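/- Let K be a separable complex Hilbert space. If W ⊆ L²(𝕋,H²_K) is a full-Hardy subspace with base J, then W⊥ is also a full-Hardy subspace, with base the measurable range function J⊥ given by J⊥(λ) = (J(λ))⊥ for a.e. λ ∈ 𝕋. -/

import Mathlib

noncomputable section

open MeasureTheory Complex Submodule
open scoped InnerProductSpace ENNReal ComplexConjugate

set_option synthInstance.maxHeartbeats 1000000
set_option maxHeartbeats 1600000

namespace ShiftPaper

instance : Fact ((0:ℝ) < 1) := ⟨one_pos⟩

/-- The circle, modelled as `ℝ/ℤ`. -/
abbrev 𝕋 : Type := UnitAddCircle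

/-- The normalized Haar (Lebesgue) probability measure on the circle. -/
abbrev μT : Measure 𝕋 := AddCircle.haarAddCircle

/-- The space `L²(𝕋, E)` of square-integrable `E`-valued functions on the circle. -/
abbrev L2 (E : Type*) [NormedAddCommGroup E] := Lp E 2 μT

lemma norm_fourier (n : ℤ) (t : 𝕋) : ‖fourier n t‖ = 1 := by
  rw [fourier_apply, Circle.norm_coe]

section mulF

variable {E : Type*} [NormedAddCommGroup E] [NormedSpace ℂ E]

lemma memLp_mulF (n : ℤ) (f : L2 E) :
    MemLp (fun t => fourier n t • (f : 𝕋 → E) t) 2 μT := by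
  refine MemLp.of_le (Lp.memLp f)
    (((fourier n).continuous.aestronglyMeasurable).smul (Lp.aestronglyMeasurable f)) ?_
  refine Filter.Eventually.of_forall fun t => ?_
  rw [norm_smul, norm_fourier, one_mul]

/-- Multiplication by `fourier n` (i.e. by `λ ↦ λⁿ`) as a bounded operator on `L²(𝕋, E)`.
For `n = 1` this is the bilateral shift `U`; for general `n : ℤ` it is `Uⁿ`. -/
def mulF (n : ℤ) : L2 E →L[ℂ] L2 E :=
  LinearMap.mkContinuous
    { toFun := fun f => (memLp_mulF n f).toLp _
      map_add' := fun f g => by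
        rw [← MemLp.toLp_add (memLp_mulF n f) (memLp_mulF n g)]
        refine MemLp.toLp_congr _ _ ?_
        filter_upwards [Lp.coeFn_add f g] with t ht
        simp only [ht, Pi.add_apply, smul_add]
      map_smul' := fun c f => by
        simp only [RingHom.id_apply]
        rw [← MemLp.toLp_const_smul c (memLp_mulF n f)]
        refine MemLp.toLp_congr _ _ ?_
        filter_upwards [Lp.coeFn_smul c f] with t ht
        rw [ht]
        simp only [Pi.smul_apply]
        rw [smul_comm] }
    1
    (fun f => by
      simp only [LinearMap.coe_mk, AddHom.coe_mk, one_mul]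
      rw [Lp.norm_toLp _ (memLp_mulF n f), Lp.norm_def]
      refine le_of_eq (congrArg ENNReal.toReal ?_)
      refine eLpNorm_congr_norm_ae ?_
      refine Filter.Eventually.of_forall fun t => ?_
      rw [norm_smul, norm_fourier, one_mul])

lemma coeFn_mulF (n : ℤ) (f : L2 E) :
    (mulF n f : 𝕋 → E) =ᵐ[μT] fun t => fourier n t • (f : 𝕋 → E) t :=
  MemLp.coeFn_toLp (memLp_mulF n f)

end mulF

section HardySpace

variable (K : Type) [NormedAddCommGroup K] [InnerProductSpace ℂ K] [CompleteSpace K]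

/-- The continuous function `t ↦ fourier n t • x`. -/
def fourierSmulCM (n : ℤ) (x : K) : C(𝕋, K) :=
  ⟨fun t => fourier n t • x, (fourier n).continuous.smul continuous_const⟩

/-- The element of `L²(𝕋, K)` given by `t ↦ fourier n t • x`. -/
def expVec (n : ℤ) (x : K) : L2 K := ContinuousMap.toLp 2 μT ℂ (fourierSmulCM K n x)

lemma coeFn_expVec (n : ℤ) (x : K) :
    (expVec K n x : 𝕋 → K) =ᵐ[μT] fun t => fourier n t • x :=
  ContinuousMap.coeFn_toLp (𝕜 := ℂ) μT (fourierSmulCM K n x)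

/-- The Hardy space `H²(𝕋, K)`, as the subspace of `L²(𝕋, K)` of functions all of whose
weak Fourier coefficients of negative index vanish (equivalently, all of whose coordinate
functions with respect to an orthonormal basis of `K` lie in the scalar Hardy space `H²`). -/
def Hardy : Submodule ℂ (L2 K) :=
  ⨅ (n : ℤ) (_ : n < 0) (x : K), LinearMap.ker (innerSL ℂ (expVec K n x) : L2 K →ₗ[ℂ] ℂ)

lemma isClosed_Hardy : IsClosed ((Hardy K : Set (L2 K))) := by
  have h : (Hardy K : Set (L2 K)) = ⋂ (n : ℤ) (_ : n < 0) (x : K),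
      (LinearMap.ker (innerSL ℂ (expVec K n x) : L2 K →ₗ[ℂ] ℂ) : Set (L2 K)) := by
    simp only [Hardy, Submodule.coe_iInf]
  rw [h]
  exact isClosed_iInter fun n => isClosed_iInter fun _ => isClosed_iInter fun x =>
    (ContinuousLinearMap.isClosed_ker _)

/-- The Hardy space `H²(𝕋, K)` as a Hilbert space in its own right. -/
abbrev H2 := ↥(Hardy K)

instance : CompleteSpace (H2 K) := (isClosed_Hardy K).completeSpace_coe

end HardySpace


section Shift

variable (K : Type) [NormedAddCommGroup K] [InnerProductSpace ℂ K] [CompleteSpace K]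

lemma inner_expVec_mulF (n : ℤ) (x : K) (f : L2 K) :
    (inner ℂ (expVec K n x) (mulF 1 f) : ℂ) = inner ℂ (expVec K (n - 1) x) f := by
  rw [MeasureTheory.L2.inner_def, MeasureTheory.L2.inner_def]
  refine integral_congr_ae ?_
  filter_upwards [coeFn_mulF 1 f, coeFn_expVec K n x, coeFn_expVec K (n-1) x] with t h1 h2 h3
  rw [h1, h2, h3, inner_smul_left, inner_smul_left, inner_smul_right,
    ← fourier_neg, ← fourier_neg, ← mul_assoc, ← fourier_add]
  have h : -n + 1 = -(n - 1) := by ring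
  rw [h]

lemma mulF_mem_hardy {f : L2 K} (hf : f ∈ Hardy K) : mulF 1 f ∈ Hardy K := by
  simp only [Hardy, Submodule.mem_iInf, LinearMap.mem_ker, ContinuousLinearMap.coe_coe, innerSL_apply_apply] at hf ⊢
  intro n hn x
  rw [inner_expVec_mulF]
  exact hf (n - 1) (by omega) x

/-- The unilateral shift `S` on the Hardy space `H²(𝕋, K)`: the restriction of the
bilateral shift (multiplication by the variable) to the Hardy space. -/
def S : H2 K →L[ℂ] H2 K where
  toLinearMap := (mulF (E := K) 1).toLinearMap.restrict
    (p := Hardy K) (q := Hardy K) (fun _ hx => mulF_mem_hardy K hx)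
  cont := by
    apply Continuous.subtype_mk
    exact (mulF (E := K) 1).continuous.comp continuous_subtype_val

/-- The operator `Ŝ` on `L²(𝕋, H²(𝕋,K))`, acting pointwisely (on the values) as the
unilateral shift `S`. -/
def Shat : L2 (H2 K) →L[ℂ] L2 (H2 K) := (S K).compLpL 2 μT

lemma integral_fourier_eq_zero {m : ℤ} (hm : m ≠ 0) :
    ∫ t : 𝕋, fourier m t ∂μT = 0 := by
  have h0 : ((0:ℤ)) ≠ m := fun h => hm h.symm
  have h : (inner ℂ (fourierLp (T := 1) 2 (0:ℤ)) (fourierLp 2 m) : ℂ) = 0 :=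
    orthonormal_fourier.2 h0
  rw [MeasureTheory.L2.inner_def] at h
  rw [← h]
  refine integral_congr_ae ?_
  filter_upwards [coeFn_fourierLp 2 (0:ℤ), coeFn_fourierLp 2 m] with t h1 h2
  rw [h1, h2]
  simp [fourier_zero]

lemma const_mem_hardy (x : K) : expVec K 0 x ∈ Hardy K := by
  simp only [Hardy, Submodule.mem_iInf, LinearMap.mem_ker, ContinuousLinearMap.coe_coe, innerSL_apply_apply]
  intro n hn y
  rw [MeasureTheory.L2.inner_def]
  have h : ∀ᵐ t ∂μT, (inner ℂ ((expVec K n y : 𝕋 → K) t) ((expVec K 0 x : 𝕋 → K) t) : ℂ)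
      = fourier (-n) t * (inner ℂ y x : ℂ) := by
    filter_upwards [coeFn_expVec K n y, coeFn_expVec K 0 x] with t h1 h2
    rw [h1, h2, inner_smul_left, inner_smul_right, ← fourier_neg, fourier_zero, one_mul]
  rw [integral_congr_ae h, integral_mul_const,
    integral_fourier_eq_zero (by omega), zero_mul]

/-- The linear embedding of `K` into `H²(𝕋,K)` as constant functions. -/
def constL : K →ₗ[ℂ] H2 K where
  toFun x := ⟨expVec K 0 x, const_mem_hardy K x⟩
  map_add' x y := by
    apply Subtype.ext
    simp only [Submodule.coe_add]
    unfold expVec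
    rw [← map_add]
    congr 1
    ext t
    simp [fourierSmulCM, smul_add]
  map_smul' c x := by
    apply Subtype.ext
    simp only [RingHom.id_apply, SetLike.val_smul]
    unfold expVec
    rw [← _root_.map_smul]
    congr 1
    ext t
    simp [fourierSmulCM]

end Shift


section RangeFunctions

variable {F : Type*} [NormedAddCommGroup F] [InnerProductSpace ℂ F] [CompleteSpace F]

/-- The orthogonal projection onto a closed subspace, as a plain function (defined to be `0`
if the subspace is not closed). -/
def projTo (N : Submodule ℂ F) (x : F) : F :=
  letI := Classical.dec (IsClosed ((N : Set F)))
  if h : IsClosed ((N : Set F)) then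
    haveI : CompleteSpace N := h.completeSpace_coe
    (orthogonalProjection N x : F)
  else 0

/-- A measurable range function in `F`: a map `J` from `𝕋` to closed subspaces of `F` such
that `t ↦ ⟪P_{J(t)} x, y⟫` is measurable for every `x, y ∈ F`. -/
def IsMeasRange (J : 𝕋 → Submodule ℂ F) : Prop :=
  (∀ t, IsClosed ((J t : Set F))) ∧
  ∀ x y : F, Measurable fun t => (inner ℂ (projTo (J t) x) y : ℂ)

/-- The set of `f ∈ L²(𝕋, E)` such that `f(t) ∈ J(t)` for a.e. `t ∈ 𝕋`. -/
def rangeSet {E : Type*} [NormedAddCommGroup E] [NormedSpace ℂ E]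
    (J : 𝕋 → Submodule ℂ E) : Set (L2 E) :=
  {f | ∀ᵐ t ∂μT, (f : 𝕋 → E) t ∈ J t}

end RangeFunctions

section OperatorNotions

variable {E : Type*} [NormedAddCommGroup E] [NormedSpace ℂ E]

/-- A subspace `M` is invariant under the bounded operator `A` if `A(M) ⊆ M`. -/
def InvariantUnder (A : E →L[ℂ] E) (M : Submodule ℂ E) : Prop :=
  ∀ f ∈ M, A f ∈ M

/-- Two bounded operators commute. -/
def CommutesWith (A B : E →L[ℂ] E) : Prop := ∀ f, A (B f) = B (A f)

variable {F : Type*} [NormedAddCommGroup F] [InnerProductSpace ℂ F]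

/-- A subspace `M` is reducing for `A` if both `M` and `M^⊥` are invariant under `A`. -/
def Reducing (A : F →L[ℂ] F) (M : Submodule ℂ F) : Prop :=
  InvariantUnder A M ∧ InvariantUnder A Mᗮ

/-- `Φ` is a partial isometry with initial space `W`: it is isometric on `W` and vanishes
on `W^⊥`. -/
def IsPartialIsometryOn (Φ : F →L[ℂ] F) (W : Submodule ℂ F) : Prop :=
  (∀ f ∈ W, ‖Φ f‖ = ‖f‖) ∧ ∀ f ∈ Wᗮ, Φ f = 0

end OperatorNotions

section FullHardy

variable (K : Type) [NormedAddCommGroup K] [InnerProductSpace ℂ K] [CompleteSpace K]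

/-- For a subspace `N ⊆ K`, the subspace `H²_N` of `H²_K`: those elements of the Hardy space
taking values in `N` almost everywhere. -/
def hardyIn (N : Submodule ℂ K) : Submodule ℂ (H2 K) where
  carrier := {g | ∀ᵐ z ∂μT, ((g : L2 K) : 𝕋 → K) z ∈ N}
  zero_mem' := by
    have h0 : ((0 : H2 K) : L2 K) = 0 := rfl
    rw [Set.mem_setOf_eq, h0]
    filter_upwards [Lp.coeFn_zero K 2 μT] with z hz
    rw [hz]
    exact N.zero_mem
  add_mem' := by
    intro a b ha hb
    have h0 : ((a + b : H2 K) : L2 K) = (a : L2 K) + (b : L2 K) := rfl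
    rw [Set.mem_setOf_eq, h0]
    filter_upwards [ha, hb, Lp.coeFn_add (a : L2 K) (b : L2 K)] with z ha' hb' hadd
    rw [hadd]
    exact N.add_mem ha' hb'
  smul_mem' := by
    intro c a ha
    have h0 : ((c • a : H2 K) : L2 K) = c • (a : L2 K) := rfl
    rw [Set.mem_setOf_eq, h0]
    filter_upwards [ha, Lp.coeFn_smul c (a : L2 K)] with z ha' hsmul
    rw [hsmul]
    exact N.smul_mem c ha'

/-- The set of `f ∈ L²(𝕋, H²_K)` with `f(t) ∈ H²_{J(t)}` for a.e. `t`. If `J` is a measurable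
range function in `K`, this is the full-Hardy subspace with base `J`. -/
def fullHardySet (J : 𝕋 → Submodule ℂ K) : Set (L2 (H2 K)) :=
  {f | ∀ᵐ t ∂μT, (f : 𝕋 → H2 K) t ∈ hardyIn K (J t)}

/-- A subspace `W ⊆ L²(𝕋, H²_K)` is full-Hardy if it is of the form
`{f : f(t) ∈ H²_{J(t)} a.e.}` for some measurable range function `J` in `K`. -/
def IsFullHardy (W : Submodule ℂ (L2 (H2 K))) : Prop :=
  ∃ J : 𝕋 → Submodule ℂ K, IsMeasRange J ∧ (W : Set (L2 (H2 K))) = fullHardySet K J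

end FullHardy

section Dimension

open scoped Classical in
/-- The Hilbert-space dimension of a subspace, as an element of `ℕ∞` (in a separable ambient
space this is the cardinality of any orthonormal basis). -/
def dimSub {F : Type*} [NormedAddCommGroup F] [InnerProductSpace ℂ F]
    (N : Submodule ℂ F) : ℕ∞ :=
  if FiniteDimensional ℂ ↥N then (Module.finrank ℂ ↥N : ℕ∞) else ⊤

end Dimension

section ScalarCase

/-- Evaluation of an element of the scalar Hardy space (via its chosen representative). -/
def ev (g : H2 ℂ) (z : 𝕋) : ℂ := ((g : L2 ℂ) : 𝕋 → ℂ) z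

/-- Iterated evaluation of an element of `L²(𝕋, H²)`. -/
def ev2 (f : L2 (H2 ℂ)) (t z : 𝕋) : ℂ := ev ((f : 𝕋 → H2 ℂ) t) z

/-- A function `h ∈ H²` is inner if `|h(z)| = 1` for a.e. `z ∈ 𝕋`. -/
def IsInnerFn (g : H2 ℂ) : Prop := ∀ᵐ z ∂μT, ‖ev g z‖ = 1

lemma ev_zero : ∀ᵐ z ∂μT, ev (0 : H2 ℂ) z = 0 := by
  have h0 : ((0 : H2 ℂ) : L2 ℂ) = 0 := rfl
  unfold ev
  rw [h0]
  filter_upwards [Lp.coeFn_zero ℂ 2 μT] with z hz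
  rw [hz]
  rfl

lemma ev_add (u v : H2 ℂ) : ∀ᵐ z ∂μT, ev (u + v) z = ev u z + ev v z := by
  have h0 : ((u + v : H2 ℂ) : L2 ℂ) = (u : L2 ℂ) + (v : L2 ℂ) := rfl
  unfold ev
  rw [h0]
  filter_upwards [Lp.coeFn_add (u : L2 ℂ) (v : L2 ℂ)] with z hz
  rw [hz]
  rfl

lemma ev_smul (c : ℂ) (u : H2 ℂ) : ∀ᵐ z ∂μT, ev (c • u) z = c * ev u z := by
  have h0 : ((c • u : H2 ℂ) : L2 ℂ) = c • (u : L2 ℂ) := rfl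
  unfold ev
  rw [h0]
  filter_upwards [Lp.coeFn_smul c (u : L2 ℂ)] with z hz
  rw [hz]
  rfl

/-- For `w ∈ H²`, the subspace `w·H² = {w·k : k ∈ H²}` of `H²` (membership described via
a.e. pointwise multiplication of representatives). -/
def mulSet (w : H2 ℂ) : Submodule ℂ (H2 ℂ) where
  carrier := {u | ∃ k : H2 ℂ, ∀ᵐ z ∂μT, ev u z = ev w z * ev k z}
  zero_mem' := by
    refine ⟨0, ?_⟩
    filter_upwards [ev_zero] with z hz
    rw [hz, mul_zero]
  add_mem' := by
    rintro u v ⟨k₁, h₁⟩ ⟨k₂, h₂⟩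
    refine ⟨k₁ + k₂, ?_⟩
    filter_upwards [h₁, h₂, ev_add u v, ev_add k₁ k₂] with z e1 e2 e3 e4
    rw [e3, e1, e2, e4, mul_add]
  smul_mem' := by
    rintro c u ⟨k, h⟩
    refine ⟨c • k, ?_⟩
    filter_upwards [h, ev_smul c u, ev_smul c k] with z e1 e2 e3
    rw [e2, e1, e3]
    ring

/-- The set `φ·L²(𝕋, H²) = {φ g : g ∈ L²(𝕋,H²)}`, where `(φ g)(t)(z) = φ(t)(z)·g(t)(z)`. -/
def timesSet (φ : L2 (H2 ℂ)) : Set (L2 (H2 ℂ)) :=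
  {h | ∃ g : L2 (H2 ℂ), ∀ᵐ t ∂μT, ∀ᵐ z ∂μT, ev2 h t z = ev2 φ t z * ev2 g t z}

end ScalarCase

section Aux12
set_option linter.unusedSectionVars false


variable (K : Type) [NormedAddCommGroup K] [InnerProductSpace ℂ K] [CompleteSpace K]

lemma inner_expVec_expVec (m n : ℤ) (x y : K) :
    (inner ℂ (expVec K m x) (expVec K n y) : ℂ)
      = (∫ t : 𝕋, fourier (n - m) t ∂μT) * inner ℂ x y := by
  rw [MeasureTheory.L2.inner_def]
  rw [← integral_mul_const]
  refine integral_congr_ae ?_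
  filter_upwards [coeFn_expVec K m x, coeFn_expVec K n y] with t h1 h2
  rw [h1, h2, inner_smul_left, inner_smul_right, ← fourier_neg, ← mul_assoc, ← fourier_add]
  congr 2
  ring

lemma expVec_mem_hardy {n : ℤ} (hn : 0 ≤ n) (x : K) : expVec K n x ∈ Hardy K := by
  simp only [Hardy, Submodule.mem_iInf, LinearMap.mem_ker, ContinuousLinearMap.coe_coe, innerSL_apply_apply]
  intro m hm y
  rw [inner_expVec_expVec, integral_fourier_eq_zero (by omega), zero_mul]

lemma norm_expVec (n : ℤ) (x : K) : ‖expVec K n x‖ = ‖x‖ := by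
  have h : (inner ℂ (expVec K n x) (expVec K n x) : ℂ) = inner ℂ x x := by
    rw [inner_expVec_expVec]
    simp [fourier_zero]
  rw [norm_eq_sqrt_re_inner (𝕜 := ℂ) (expVec K n x), norm_eq_sqrt_re_inner (𝕜 := ℂ) x, h]

lemma expVec_add (n : ℤ) (x y : K) :
    expVec K n (x + y) = expVec K n x + expVec K n y := by
  refine Lp.ext ?_
  filter_upwards [coeFn_expVec K n (x + y), coeFn_expVec K n x, coeFn_expVec K n y,
    Lp.coeFn_add (expVec K n x) (expVec K n y)] with t h1 h2 h3 h4
  rw [h1, h4, Pi.add_apply, h2, h3, smul_add]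

lemma expVec_smul (n : ℤ) (c : ℂ) (x : K) :
    expVec K n (c • x) = c • expVec K n x := by
  refine Lp.ext ?_
  filter_upwards [coeFn_expVec K n (c • x), coeFn_expVec K n x,
    Lp.coeFn_smul c (expVec K n x)] with t h1 h2 h3
  rw [h1, h3, Pi.smul_apply, h2, smul_comm]

/-- `expVec K n` as a continuous linear map. -/
def expVecCLM (n : ℤ) : K →L[ℂ] L2 K :=
  LinearMap.mkContinuous
    { toFun := fun x => expVec K n x
      map_add' := expVec_add K n
      map_smul' := fun c x => expVec_smul K n c x }
    1 (fun x => by simp [norm_expVec])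

@[simp] lemma expVecCLM_apply (n : ℤ) (x : K) : expVecCLM K n x = expVec K n x := rfl

/-- `x ↦ (z ↦ zⁿ x)` as a continuous linear map `K →L H²(𝕋,K)`, for `n : ℕ`. -/
def eH (n : ℕ) : K →L[ℂ] H2 K :=
  ContinuousLinearMap.codRestrict (expVecCLM K n) (Hardy K)
    (fun x => expVec_mem_hardy K (by positivity) x)

@[simp] lemma eH_coe (n : ℕ) (x : K) : (eH K n x : L2 K) = expVec K n x := rfl



variable (K : Type) [NormedAddCommGroup K] [InnerProductSpace ℂ K] [CompleteSpace K]

/-- Totality of the exponentials in `L²(𝕋,K)`. -/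
lemma eq_zero_of_forall_inner_expVec [SecondCountableTopology K] (u : L2 K)
    (h : ∀ (m : ℤ) (x : K), (inner ℂ (expVec K m x) u : ℂ) = 0) : u = 0 := by
  rw [Lp.eq_zero_iff_ae_eq_zero]
  refine ae_eq_zero_of_forall_inner (𝕜 := ℂ) fun x => ?_
  set φ : Lp ℂ 2 μT := (innerSL ℂ x).compLp u with hφ
  have hrepr : ∀ m : ℤ, (fourierBasis (T := 1)).repr φ m = 0 := by
    intro m
    rw [HilbertBasis.repr_apply_apply, coe_fourierBasis]
    rw [← h m x, MeasureTheory.L2.inner_def, MeasureTheory.L2.inner_def]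
    refine integral_congr_ae ?_
    filter_upwards [coeFn_fourierLp (T := 1) 2 m, (innerSL ℂ x).coeFn_compLp u,
      coeFn_expVec K m x] with t h1 h2 h3
    rw [h1, h2, h3, inner_smul_left]
    simp [RCLike.inner_apply, ← fourier_neg, mul_comm]
  have hzero : φ = 0 := by
    have h0 : (fourierBasis (T := 1)).repr φ = 0 := by
      ext m
      simpa using hrepr m
    have := congrArg (fourierBasis (T := 1)).repr.symm h0
    simpa using this
  have h1 := (innerSL ℂ x).coeFn_compLp u
  rw [← hφ, hzero] at h1
  filter_upwards [h1, Lp.coeFn_zero ℂ 2 μT] with t e1 e2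
  rw [Pi.zero_apply]
  show innerSL ℂ x ((u : 𝕋 → K) t) = 0
  rw [← e1, e2]
  rfl



section Proj
variable {K : Type} [NormedAddCommGroup K] [InnerProductSpace ℂ K] [CompleteSpace K]

/-- The orthogonal projection onto a closed subspace, as a continuous linear map. -/
def projCLM (N : Submodule ℂ K) (hN : IsClosed (N : Set K)) : K →L[ℂ] K :=
  haveI : CompleteSpace N := hN.completeSpace_coe
  N.subtypeL.comp (orthogonalProjection N)

lemma projTo_eq_projCLM {N : Submodule ℂ K} (hN : IsClosed (N : Set K)) (x : K) :
    projTo N x = projCLM N hN x := by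
  haveI : CompleteSpace N := hN.completeSpace_coe
  simp only [projTo, dif_pos hN]
  rfl

lemma projCLM_mem {N : Submodule ℂ K} (hN : IsClosed (N : Set K)) (x : K) :
    projCLM N hN x ∈ N := by
  haveI : CompleteSpace N := hN.completeSpace_coe
  exact (orthogonalProjection N x).2

lemma sub_projCLM_mem {N : Submodule ℂ K} (hN : IsClosed (N : Set K)) (x : K) :
    x - projCLM N hN x ∈ Nᗮ := by
  haveI : CompleteSpace N := hN.completeSpace_coe
  exact N.sub_starProjection_mem_orthogonal x

lemma projCLM_selfadj {N : Submodule ℂ K} (hN : IsClosed (N : Set K)) (a b : K) :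
    (inner ℂ (projCLM N hN a) b : ℂ) = inner ℂ a (projCLM N hN b) := by
  haveI : CompleteSpace N := hN.completeSpace_coe
  exact Submodule.inner_starProjection_left_eq_right (K := N) a b

lemma projCLM_idem {N : Submodule ℂ K} (hN : IsClosed (N : Set K)) (x : K) :
    projCLM N hN (projCLM N hN x) = projCLM N hN x := by
  haveI : CompleteSpace N := hN.completeSpace_coe
  have : projCLM N hN x ∈ N := projCLM_mem hN x
  show (orthogonalProjection N (projCLM N hN x) : K) = projCLM N hN x
  exact Submodule.starProjection_eq_self_iff.mpr this

lemma norm_projCLM_le {N : Submodule ℂ K} (hN : IsClosed (N : Set K)) (x : K) :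
    ‖projCLM N hN x‖ ≤ ‖x‖ := by
  haveI : CompleteSpace N := hN.completeSpace_coe
  calc ‖projCLM N hN x‖ = ‖orthogonalProjection N x‖ := rfl
    _ ≤ ‖orthogonalProjection N‖ * ‖x‖ := (orthogonalProjection N).le_opNorm x
    _ ≤ 1 * ‖x‖ := by gcongr; exact orthogonalProjection_norm_le N
    _ = ‖x‖ := one_mul _

lemma projTo_orthogonal {N : Submodule ℂ K} (hN : IsClosed (N : Set K)) (x : K) :
    projTo Nᗮ x = x - projTo N x := by
  haveI : CompleteSpace N := hN.completeSpace_coe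
  rw [projTo_eq_projCLM N.isClosed_orthogonal, projTo_eq_projCLM hN]
  show (orthogonalProjection Nᗮ x : K) = _
  rw [show (orthogonalProjection Nᗮ x : K) = Nᗮ.starProjection x from rfl, Submodule.starProjection_orthogonal_val]
  rfl
end Proj

variable (K : Type) [NormedAddCommGroup K] [InnerProductSpace ℂ K] [CompleteSpace K]

lemma mem_hardyIn_iff {N : Submodule ℂ K} {g : H2 K} :
    g ∈ hardyIn K N ↔ ∀ᵐ z ∂μT, ((g : L2 K) : 𝕋 → K) z ∈ N := Iff.rfl

lemma inner_H2_eq_integral (u v : H2 K) :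
    (inner ℂ u v : ℂ) = ∫ t : 𝕋, (inner ℂ (((u : L2 K) : 𝕋 → K) t) (((v : L2 K) : 𝕋 → K) t) : ℂ) ∂μT := by
  rw [Submodule.coe_inner, MeasureTheory.L2.inner_def]

lemma inner_hardyIn_orth {N : Submodule ℂ K} {u v : H2 K}
    (hu : u ∈ hardyIn K N) (hv : v ∈ hardyIn K Nᗮ) : (inner ℂ u v : ℂ) = 0 := by
  rw [inner_H2_eq_integral]
  rw [show (0 : ℂ) = ∫ _t : 𝕋, (0 : ℂ) ∂μT by simp]
  refine integral_congr_ae ?_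
  filter_upwards [hu, hv] with t h1 h2
  exact (Submodule.mem_orthogonal N _).mp h2 _ h1



variable (K : Type) [NormedAddCommGroup K] [InnerProductSpace ℂ K] [CompleteSpace K]

lemma inner_expVec_compLp (m : ℤ) (x : K) (A : K →L[ℂ] K)
    (hA : ∀ a b : K, (inner ℂ (A a) b : ℂ) = inner ℂ a (A b)) (u : L2 K) :
    (inner ℂ (expVec K m x) (A.compLp u) : ℂ) = inner ℂ (expVec K m (A x)) u := by
  rw [MeasureTheory.L2.inner_def, MeasureTheory.L2.inner_def]
  refine integral_congr_ae ?_
  filter_upwards [coeFn_expVec K m x, coeFn_expVec K m (A x), A.coeFn_compLp u]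
    with t h1 h2 h3
  rw [h1, h2, h3, inner_smul_left, inner_smul_left, ← hA]

lemma mem_hardy_iff (u : L2 K) :
    u ∈ Hardy K ↔ ∀ (m : ℤ), m < 0 → ∀ x : K, (inner ℂ (expVec K m x) u : ℂ) = 0 := by
  simp only [Hardy, Submodule.mem_iInf, LinearMap.mem_ker, ContinuousLinearMap.coe_coe, innerSL_apply_apply]

lemma compLp_projCLM_mem_hardy {N : Submodule ℂ K} (hN : IsClosed (N : Set K))
    {g : L2 K} (hg : g ∈ Hardy K) : (projCLM N hN).compLp g ∈ Hardy K := by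
  rw [mem_hardy_iff]
  intro m hm x
  rw [inner_expVec_compLp K m x _ (projCLM_selfadj hN)]
  exact (mem_hardy_iff K g).mp hg m hm _

/-- The pointwise projection of `v ∈ H²_K` onto `N`, as an element of `H²_K`. -/
def projH2 {N : Submodule ℂ K} (hN : IsClosed (N : Set K)) (v : H2 K) : H2 K :=
  ⟨(projCLM N hN).compLp (v : L2 K), compLp_projCLM_mem_hardy K hN v.2⟩

lemma projH2_mem_hardyIn {N : Submodule ℂ K} (hN : IsClosed (N : Set K)) (v : H2 K) :
    projH2 K hN v ∈ hardyIn K N := by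
  rw [mem_hardyIn_iff]
  filter_upwards [(projCLM N hN).coeFn_compLp (v : L2 K)] with z hz
  rw [show ((projH2 K hN v : H2 K) : L2 K) = (projCLM N hN).compLp (v : L2 K) from rfl, hz]
  exact projCLM_mem hN _

lemma sub_projH2_mem_hardyIn {N : Submodule ℂ K} (hN : IsClosed (N : Set K)) (v : H2 K) :
    v - projH2 K hN v ∈ hardyIn K Nᗮ := by
  rw [mem_hardyIn_iff]
  have hcoe : ((v - projH2 K hN v : H2 K) : L2 K)
      = (v : L2 K) - (projCLM N hN).compLp (v : L2 K) := rfl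
  rw [hcoe]
  filter_upwards [(projCLM N hN).coeFn_compLp (v : L2 K),
    Lp.coeFn_sub (v : L2 K) ((projCLM N hN).compLp (v : L2 K))] with z h1 h2
  rw [h2, Pi.sub_apply, h1]
  exact sub_projCLM_mem hN _

lemma mem_hardyIn_orth_of_forall [SecondCountableTopology K]
    {N : Submodule ℂ K} (hN : IsClosed (N : Set K)) (v : H2 K)
    (hyp : ∀ (n : ℕ) (x : K), (inner ℂ (eH K n (projCLM N hN x)) v : ℂ) = 0) :
    v ∈ hardyIn K Nᗮ := by
  have hvN : projH2 K hN v = 0 := by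
    apply Subtype.ext
    refine eq_zero_of_forall_inner_expVec K _ ?_
    intro m x
    rcases lt_or_ge m 0 with hm | hm
    · exact (mem_hardy_iff K _).mp (compLp_projCLM_mem_hardy K hN v.2) m hm x
    · have hx : x = projCLM N hN x + (x - projCLM N hN x) := by abel
      rw [hx, expVec_add, inner_add_left]
      have term2 : (inner ℂ (expVec K m (x - projCLM N hN x))
          ((projH2 K hN v : H2 K) : L2 K) : ℂ) = 0 := by
        rw [show ((projH2 K hN v : H2 K) : L2 K) = (projCLM N hN).compLp (v : L2 K) from rfl]
        rw [MeasureTheory.L2.inner_def]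
        rw [show (0 : ℂ) = ∫ _t : 𝕋, (0 : ℂ) ∂μT by simp]
        refine integral_congr_ae ?_
        filter_upwards [coeFn_expVec K m (x - projCLM N hN x),
          (projCLM N hN).coeFn_compLp (v : L2 K)] with t h1 h2
        rw [h1, h2, inner_smul_left]
        have : (inner ℂ (x - projCLM N hN x) (projCLM N hN (((v : L2 K) : 𝕋 → K) t)) : ℂ) = 0 :=
          (Submodule.mem_orthogonal' N _).mp (sub_projCLM_mem hN x) _ (projCLM_mem hN _)
        rw [this, mul_zero]
      have term1 : (inner ℂ (expVec K m (projCLM N hN x))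
          ((projH2 K hN v : H2 K) : L2 K) : ℂ) = 0 := by
        rw [show ((projH2 K hN v : H2 K) : L2 K) = (projCLM N hN).compLp (v : L2 K) from rfl]
        rw [inner_expVec_compLp K m _ _ (projCLM_selfadj hN), projCLM_idem hN]
        have hm' : ((m.toNat : ℤ)) = m := Int.toNat_of_nonneg hm
        have := hyp m.toNat x
        rw [Submodule.coe_inner] at this
        rw [← hm']
        exact this
      rw [term1, term2, add_zero]
  have h2 := sub_projH2_mem_hardyIn K hN v
  rw [hvN, sub_zero] at h2
  exact h2



variable {K : Type} [NormedAddCommGroup K] [InnerProductSpace ℂ K] [CompleteSpace K]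

lemma norm_projTo_sq {N : Submodule ℂ K} (hN : IsClosed (N : Set K)) (x : K) :
    ‖projTo N x‖ ^ 2 = Complex.re (inner ℂ (projTo N x) x : ℂ) := by
  rw [projTo_eq_projCLM hN]
  rw [← inner_self_eq_norm_sq (𝕜 := ℂ)]
  have h1 : (inner ℂ (projCLM N hN x) (projCLM N hN x) : ℂ) = inner ℂ x (projCLM N hN x) := by
    rw [← projCLM_idem hN x]
    rw [← projCLM_selfadj hN x (projCLM N hN x)]
    rw [projCLM_idem]
  have h2 : (inner ℂ x (projCLM N hN x) : ℂ) = conj (inner ℂ (projCLM N hN x) x : ℂ) :=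
    (inner_conj_symm _ _).symm
  rw [h1]
  exact inner_re_symm (𝕜 := ℂ) _ _

lemma measurable_norm_projTo_sub [SecondCountableTopology K] {J : 𝕋 → Submodule ℂ K}
    (hJ : IsMeasRange J) (x y : K) :
    Measurable fun t => ‖projTo (J t) x - y‖ := by
  have hns : Measurable fun t => ‖projTo (J t) x‖ ^ 2 := by
    have : (fun t => ‖projTo (J t) x‖ ^ 2)
        = fun t => Complex.re (inner ℂ (projTo (J t) x) x : ℂ) := by
      funext t
      exact norm_projTo_sq (hJ.1 t) x
    rw [this]
    exact Complex.measurable_re.comp (hJ.2 x x)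
  have hin : Measurable fun t => Complex.re (inner ℂ (projTo (J t) x) y : ℂ) :=
    Complex.measurable_re.comp (hJ.2 x y)
  have hsq : Measurable fun t => ‖projTo (J t) x - y‖ ^ 2 := by
    have : (fun t => ‖projTo (J t) x - y‖ ^ 2)
        = fun t => ‖projTo (J t) x‖ ^ 2 - 2 * Complex.re (inner ℂ (projTo (J t) x) y : ℂ)
            + ‖y‖ ^ 2 := by
      funext t
      exact norm_sub_sq (𝕜 := ℂ) _ _
    rw [this]
    exact ((hns.sub (hin.const_mul 2)).add measurable_const)
  have : (fun t => ‖projTo (J t) x - y‖) = fun t => √(‖projTo (J t) x - y‖ ^ 2) := by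
    funext t
    rw [Real.sqrt_sq (norm_nonneg _)]
  rw [this]
  exact Real.continuous_sqrt.measurable.comp hsq

/-- Pettis-type measurability: the pointwise projections `t ↦ P_{J(t)} x` are strongly
measurable for a measurable range function `J`. -/
lemma stronglyMeasurable_projTo [SecondCountableTopology K] {J : 𝕋 → Submodule ℂ K}
    (hJ : IsMeasRange J) (x : K) :
    StronglyMeasurable fun t => projTo (J t) x := by
  classical
  letI : MeasurableSpace K := borel K
  haveI : BorelSpace K := ⟨rfl⟩
  set F : 𝕋 → K := fun t => projTo (J t) x with hF
  haveI : Nonempty K := ⟨0⟩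
  set s : ℕ → K := TopologicalSpace.denseSeq K with hs
  have hdense : DenseRange s := TopologicalSpace.denseRange_denseSeq K
  have hex : ∀ (n : ℕ) (t : 𝕋), ∃ j, ‖F t - s j‖ < 1 / (n + 1) := by
    intro n t
    obtain ⟨j, hj⟩ := Metric.denseRange_iff.mp hdense (F t) (1 / (n + 1)) (by positivity)
    exact ⟨j, by rwa [dist_eq_norm] at hj⟩
  have hmeas : ∀ n : ℕ, Measurable fun t => s (Nat.find (hex n t)) := by
    intro n
    refine Measurable.find (f := fun j _ => s j) (fun j => measurable_const) ?_ (hex n)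
    intro j
    exact measurableSet_lt (measurable_norm_projTo_sub hJ x (s j)) measurable_const
  have htends : ∀ t, Filter.Tendsto (fun n => s (Nat.find (hex n t))) Filter.atTop (nhds (F t)) := by
    intro t
    rw [tendsto_iff_dist_tendsto_zero]
    refine squeeze_zero (fun n => dist_nonneg) (fun n => ?_)
      tendsto_one_div_add_atTop_nhds_zero_nat
    rw [dist_comm, dist_eq_norm]
    exact (Nat.find_spec (hex n t)).le
  have : Measurable F :=
    measurable_of_tendsto_metrizable hmeas (tendsto_pi_nhds.mpr htends)
  exact this.stronglyMeasurable



variable (K : Type) [NormedAddCommGroup K] [InnerProductSpace ℂ K] [CompleteSpace K]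
  [SecondCountableTopology K]

theorem statement12' (W : Submodule ℂ (L2 (H2 K))) (J : 𝕋 → Submodule ℂ K)
    (hJ : IsMeasRange J) (hW : (W : Set (L2 (H2 K))) = fullHardySet K J) :
    IsMeasRange (fun t => (J t)ᗮ) ∧
      (@Submodule.orthogonal ℂ (L2 (H2 K)) _ _ _ W : Set (L2 (H2 K))) = fullHardySet K (fun t => (J t)ᗮ) := by
  classical
  constructor
  · refine ⟨fun t => (J t).isClosed_orthogonal, fun x y => ?_⟩
    have h : (fun t => (inner ℂ (projTo (J t)ᗮ x) y : ℂ))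
        = fun t => (inner ℂ x y : ℂ) - inner ℂ (projTo (J t) x) y := by
      funext t
      rw [projTo_orthogonal (hJ.1 t), inner_sub_left]
    rw [h]
    exact measurable_const.sub (hJ.2 x y)
  · haveI : Nonempty K := ⟨0⟩
    set s : ℕ → K := TopologicalSpace.denseSeq K with hs
    have hdense : DenseRange s := TopologicalSpace.denseRange_denseSeq K
    ext f
    simp only [SetLike.mem_coe]
    constructor
    · -- hard direction
      intro hf
      -- the test functions
      set F : ℕ → ℕ → 𝕋 → H2 K :=
        fun n k t => eH K n (projTo (J t) (s k)) with hFdef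
      have hFm : ∀ n k, AEStronglyMeasurable (F n k) μT := fun n k =>
        ((eH K n).continuous.comp_stronglyMeasurable
          (stronglyMeasurable_projTo hJ (s k))).aestronglyMeasurable
      have hFb : ∀ n k t, ‖F n k t‖ ≤ ‖s k‖ := by
        intro n k t
        have h1 : ‖F n k t‖ = ‖expVec K n (projTo (J t) (s k))‖ := rfl
        rw [h1, norm_expVec, projTo_eq_projCLM (hJ.1 t)]
        exact norm_projCLM_le (hJ.1 t) _
      have hFmem : ∀ n k, MemLp (F n k) 2 μT := fun n k =>
        MemLp.of_bound (hFm n k) (‖s k‖) (Filter.Eventually.of_forall (hFb n k))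
      have hFval : ∀ n k t, F n k t ∈ hardyIn K (J t) := by
        intro n k t
        rw [mem_hardyIn_iff]
        filter_upwards [coeFn_expVec K n (projTo (J t) (s k))] with z hz
        rw [show ((F n k t : H2 K) : L2 K) = expVec K n (projTo (J t) (s k)) from rfl, hz]
        refine Submodule.smul_mem _ _ ?_
        rw [projTo_eq_projCLM (hJ.1 t)]
        exact projCLM_mem (hJ.1 t) _
      -- a.e. vanishing of the pointwise inner products
      have hae : ∀ (n k : ℕ), ∀ᵐ t ∂μT,
          (inner ℂ (F n k t) ((f : 𝕋 → H2 K) t) : ℂ) = 0 := by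
        intro n k
        set g0 : L2 (H2 K) := (hFmem n k).toLp (F n k) with hg0
        have hint : Integrable (fun t => (inner ℂ (F n k t) ((f : 𝕋 → H2 K) t) : ℂ)) μT := by
          refine (MeasureTheory.L2.integrable_inner (𝕜 := ℂ) g0 f).congr ?_
          filter_upwards [MemLp.coeFn_toLp (hFmem n k)] with t ht
          rw [ht]
        refine hint.ae_eq_zero_of_forall_setIntegral_eq_zero ?_
        intro A hA _
        -- the indicator test function lies in W
        set gA : L2 (H2 K) := (MemLp.indicator hA (hFmem n k) : MemLp (A.indicator (F n k)) 2 μT).toLp (A.indicator (F n k)) with hgA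
        have hgAW : gA ∈ W := by
          have : gA ∈ (W : Set (L2 (H2 K))) := by
            rw [hW]
            show ∀ᵐ t ∂μT, (gA : 𝕋 → H2 K) t ∈ hardyIn K (J t)
            filter_upwards [MemLp.coeFn_toLp (MemLp.indicator hA (hFmem n k) : MemLp (A.indicator (F n k)) 2 μT)] with t ht
            rw [ht]
            by_cases htA : t ∈ A
            · rw [Set.indicator_of_mem htA]
              exact hFval n k t
            · rw [Set.indicator_of_notMem htA]
              exact Submodule.zero_mem _
          exact this
        have hzero : (inner ℂ gA f : ℂ) = 0 := by
          have := Submodule.inner_right_of_mem_orthogonal hgAW hf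
          exact this
        rw [← hzero, MeasureTheory.L2.inner_def, ← integral_indicator hA]
        refine integral_congr_ae ?_
        filter_upwards [MemLp.coeFn_toLp (MemLp.indicator hA (hFmem n k) : MemLp (A.indicator (F n k)) 2 μT)] with t ht
        rw [ht]
        by_cases htA : t ∈ A
        · rw [Set.indicator_of_mem htA, Set.indicator_of_mem htA]
        · rw [Set.indicator_of_notMem htA, Set.indicator_of_notMem htA, inner_zero_left]
      have hae2 : ∀ᵐ t ∂μT, ∀ (n k : ℕ),
          (inner ℂ (F n k t) ((f : 𝕋 → H2 K) t) : ℂ) = 0 := by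
        rw [ae_all_iff]
        intro n
        rw [ae_all_iff]
        exact hae n
      show ∀ᵐ t ∂μT, (f : 𝕋 → H2 K) t ∈ hardyIn K (J t)ᗮ
      filter_upwards [hae2] with t ht
      refine mem_hardyIn_orth_of_forall K (hJ.1 t) _ ?_
      intro n x
      have hcl : IsClosed {x : K |
          (inner ℂ (eH K n (projCLM (J t) (hJ.1 t) x)) ((f : 𝕋 → H2 K) t) : ℂ) = 0} :=
        isClosed_eq (Continuous.inner
          ((eH K n).continuous.comp (projCLM (J t) (hJ.1 t)).continuous)
          continuous_const) continuous_const
      have hsk : ∀ k : ℕ,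
          (inner ℂ (eH K n (projCLM (J t) (hJ.1 t) (s k))) ((f : 𝕋 → H2 K) t) : ℂ) = 0 := by
        intro k
        rw [← projTo_eq_projCLM (hJ.1 t)]
        exact ht n k
      exact isClosed_property hdense hcl hsk x
    · -- easy direction
      intro hf
      rw [Submodule.mem_orthogonal]
      intro u hu
      have hu' : ∀ᵐ t ∂μT, (u : 𝕋 → H2 K) t ∈ hardyIn K (J t) := by
        have : u ∈ (W : Set (L2 (H2 K))) := hu
        rwa [hW] at this
      have hf' : ∀ᵐ t ∂μT, (f : 𝕋 → H2 K) t ∈ hardyIn K (J t)ᗮ := hf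
      rw [MeasureTheory.L2.inner_def]
      rw [show (0 : ℂ) = ∫ _t : 𝕋, (0 : ℂ) ∂μT by simp]
      refine integral_congr_ae ?_
      filter_upwards [hu', hf'] with t h1 h2
      exact inner_hardyIn_orth K h1 h2


end Aux12

section Statements

variable (K : Type) [NormedAddCommGroup K] [InnerProductSpace ℂ K] [CompleteSpace K]
  [SecondCountableTopology K]

theorem statement12 (W : Submodule ℂ (L2 (H2 K))) (J : 𝕋 → Submodule ℂ K)
    (hJ : IsMeasRange J) (hW : (W : Set (L2 (H2 K))) = fullHardySet K J) :
    IsMeasRange (fun t => (J t)ᗮ) ∧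
      (@Submodule.orthogonal ℂ (L2 (H2 K)) _ _ _ W : Set (L2 (H2 K))) = fullHardySet K (fun t => (J t)ᗮ) :=
  statement12' K W J hJ hW

end Statements

end ShiftPaper
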